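/- Let 𝔤₁, …, 𝔤ₙ be finite-dimensional simple complex Lie algebras and let 𝔤 = 𝔤₁ ⊕ … ⊕ 𝔤ₙ be their direct sum. For each i let dᵢ denote the minimal complex dimension of a finite-dimensional 𝔤ᵢ-module on which 𝔤ᵢ acts nontrivially. If M is a finite-dimensional 𝔤-module with dim M < d₁ + … + dₙ, then there exists an index i such that the ideal 𝔤ᵢ ⊆ 𝔤 acts trivially on M (i.e., x·m = 0 for all x in the i-th summand and all m ∈ M). -/

import Mathlib

open Module


open scoped DirectSum

/-- The minimal (complex) dimension of a finite-dimensional module over the Lie algebra `L`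
on which `L` acts nontrivially. -/
noncomputable def minNontrivialDim (L : Type) [LieRing L] [LieAlgebra ℂ L] : ℕ :=
  sInf {k : ℕ | ∃ (M : Type) (_ : AddCommGroup M) (_ : Module ℂ M)
    (_ : LieRingModule L M) (_ : LieModule ℂ L M),
    FiniteDimensional ℂ M ∧ (∃ (x : L) (m : M), ⁅x, m⁆ ≠ 0) ∧ Module.finrank ℂ M = k}

section Helpers

variable (K : Type*) [LieRing K] [LieAlgebra ℂ K]

attribute [local instance 100] LieRing.ofAssociativeRing

lemma derived_top [LieAlgebra.IsSimple ℂ K] : LieAlgebra.derivedSeries ℂ K 1 = ⊤ := by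
  rcases LieAlgebra.IsSimple.eq_bot_or_eq_top (LieAlgebra.derivedSeries ℂ K 1) with h | h
  · exfalso
    apply LieAlgebra.IsSimple.non_abelian (R := ℂ) (L := K)
    constructor
    intro x y
    have hx : ⁅x, y⁆ ∈ LieAlgebra.derivedSeries ℂ K 1 := by
      rw [LieAlgebra.derivedSeries_def, LieAlgebra.derivedSeriesOfIdeal_succ,
        LieAlgebra.derivedSeriesOfIdeal_zero]
      exact LieSubmodule.lie_mem_lie (LieSubmodule.mem_top _) (LieSubmodule.mem_top _)
    rw [h] at hx
    simpa using hx
  · exact h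

lemma trivial_of_comm [LieAlgebra.IsSimple ℂ K]
    (W : Type*) [AddCommGroup W] [Module ℂ W] [LieRingModule K W] [LieModule ℂ K W]
    (h : ∀ (x y : K) (m : W), ⁅x, ⁅y, m⁆⁆ = ⁅y, ⁅x, m⁆⁆) :
    ∀ (x : K) (m : W), ⁅x, m⁆ = 0 := by
  have hker : LieAlgebra.derivedSeries ℂ K 1 ≤ (LieModule.toEnd ℂ K W).ker := by
    rw [LieAlgebra.derivedSeries_def, LieAlgebra.derivedSeriesOfIdeal_succ,
      LieAlgebra.derivedSeriesOfIdeal_zero, LieSubmodule.lieIdeal_oper_eq_span]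
    rw [LieSubmodule.lieSpan_le]
    rintro z ⟨x, y, rfl⟩
    show _ ∈ (LieModule.toEnd ℂ K W).ker
    rw [LieHom.mem_ker]
    ext m
    simp only [LieHom.map_lie, LinearMap.zero_apply]
    change ⁅(x:K), ⁅(y:K), m⁆⁆ - ⁅(y:K), ⁅(x:K), m⁆⁆ = 0
    rw [h]
    abel
  intro x m
  have hx : x ∈ (LieModule.toEnd ℂ K W).ker := by
    apply hker
    rw [derived_top]
    trivial
  rw [LieHom.mem_ker] at hx
  have : LieModule.toEnd ℂ K W x m = 0 := by rw [hx]; rfl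
  simpa using this

end Helpers
section Helpers2

variable (K : Type) [LieRing K] [LieAlgebra ℂ K]

lemma d_le (W : Type) [AddCommGroup W] [Module ℂ W] [LieRingModule K W] [LieModule ℂ K W]
    [FiniteDimensional ℂ W] (h : ∃ (x : K) (m : W), ⁅x, m⁆ ≠ 0) :
    minNontrivialDim K ≤ finrank ℂ W :=
  Nat.sInf_le ⟨W, ‹_›, ‹_›, ‹_›, ‹_›, ‹_›, h, rfl⟩

lemma two_le_d [LieAlgebra.IsSimple ℂ K] [FiniteDimensional ℂ K] : 2 ≤ minNontrivialDim K := by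
  have hne : ∃ (x : K) (m : K), ⁅x, m⁆ ≠ 0 := by
    by_contra hc
    push_neg at hc
    exact LieAlgebra.IsSimple.non_abelian (R := ℂ) (L := K) ⟨hc⟩
  have hnonempty : {k : ℕ | ∃ (M : Type) (_ : AddCommGroup M) (_ : Module ℂ M)
      (_ : LieRingModule K M) (_ : LieModule ℂ K M),
      FiniteDimensional ℂ M ∧ (∃ (x : K) (m : M), ⁅x, m⁆ ≠ 0) ∧
      Module.finrank ℂ M = k}.Nonempty :=
    ⟨finrank ℂ K, K, inferInstance, inferInstance, inferInstance, inferInstance, inferInstance,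
      hne, rfl⟩
  have hmem := Nat.sInf_mem hnonempty
  obtain ⟨W, _, _, _, _, _, ⟨x, m, hxm⟩, hrank⟩ := hmem
  rw [minNontrivialDim, ← hrank]
  by_contra hlt
  push_neg at hlt
  interval_cases hW : finrank ℂ W
  · have : Subsingleton W := finrank_zero_iff.mp hW
    exact hxm (Subsingleton.elim _ _)
  · -- dimension 1 : every endomorphism is scalar
    have hnontriv : Nontrivial W := by
      by_contra hn
      have : Subsingleton W := not_nontrivial_iff_subsingleton.mp hn
      exact hxm (Subsingleton.elim _ _)
    have hscal : ∀ f : Module.End ℂ W, ∃ c : ℂ, ∀ w : W, f w = c • w := by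
      intro f
      obtain ⟨c, hc⟩ := Module.End.exists_eigenvalue f
      refine ⟨c, ?_⟩
      have h1 : (Module.End.eigenspace f c : Submodule ℂ W) ≠ ⊥ := hc
      have h2 : Module.End.eigenspace f c = ⊤ := by
        apply Submodule.eq_top_of_finrank_eq
        rw [hW]
        have := Submodule.finrank_le (Module.End.eigenspace f c)
        have h3 : 0 < finrank ℂ (Module.End.eigenspace f c) := by
          have := mt Submodule.finrank_eq_zero.mp h1
          omega
        omega
      intro w
      have : w ∈ Module.End.eigenspace f c := h2 ▸ Submodule.mem_top
      exact (Module.End.mem_eigenspace_iff).mp this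
    apply hxm
    have hcomm : ∀ (a b : K) (w : W), ⁅a, ⁅b, w⁆⁆ = ⁅b, ⁅a, w⁆⁆ := by
      intro a b w
      obtain ⟨ca, hca⟩ := hscal (LieModule.toEnd ℂ K W a)
      obtain ⟨cb, hcb⟩ := hscal (LieModule.toEnd ℂ K W b)
      have ha : ∀ u : W, ⁅a, u⁆ = ca • u := by intro u; have := hca u; simpa using this
      have hb : ∀ u : W, ⁅b, u⁆ = cb • u := by intro u; have := hcb u; simpa using this
      rw [ha, hb, ha, hb, smul_comm]
    exact trivial_of_comm K W hcomm x m

end Helpers2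
section Hom

variable (K : Type) [LieRing K] [LieAlgebra ℂ K]
variable (V : Type) [AddCommGroup V] [Module ℂ V] [LieRingModule K V]
variable (W : Type) [AddCommGroup W] [Module ℂ W] [LieRingModule K W] [LieModule ℂ K W]

/-- The space of `K`-equivariant linear maps, as a submodule of the space of linear maps. -/
def equivMaps : Submodule ℂ (V →ₗ[ℂ] W) where
  carrier := {f | ∀ (x : K) (v : V), f ⁅x, v⁆ = ⁅x, f v⁆}
  add_mem' := by
    intro f g hf hg x v
    simp [hf x v, hg x v]
  zero_mem' := by intro x v; simp
  smul_mem' := by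
    intro c f hf x v
    simp [hf x v]

variable {K V W}

/-- Schur: an equivariant endomorphism of a simple module is a scalar. -/
lemma schur_scalar [LieModule ℂ K V] [FiniteDimensional ℂ V] [Nontrivial V]
    (hV : ∀ p : LieSubmodule ℂ K V, p = ⊥ ∨ p = ⊤)
    (h : V →ₗ[ℂ] V) (hequiv : ∀ (x : K) (v : V), h ⁅x, v⁆ = ⁅x, h v⁆) :
    ∃ c : ℂ, ∀ v, h v = c • v := by
  obtain ⟨c, hc⟩ := Module.End.exists_eigenvalue (h : Module.End ℂ V)
  refine ⟨c, ?_⟩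
  set p : LieSubmodule ℂ K V :=
    { carrier := {v | h v = c • v}
      add_mem' := by intro a b ha hb; simp only [Set.mem_setOf_eq] at *; rw [map_add, ha, hb, smul_add]
      zero_mem' := by simp
      smul_mem' := by intro t a ha; simp only [Set.mem_setOf_eq] at *; rw [map_smul, ha, smul_comm]
      lie_mem := by
        intro x a ha
        simp only [Set.mem_setOf_eq] at *
        rw [hequiv, ha, lie_smul] } with hp
  have hpne : p ≠ ⊥ := by
    obtain ⟨v, hv⟩ := hc.exists_hasEigenvector
    intro hbot
    have hvp : v ∈ p := by
      show h v = c • v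
      exact Module.End.mem_eigenspace_iff.mp hv.1
    rw [hbot] at hvp
    exact hv.2 (by simpa using hvp)
  rcases hV p with h1 | h1
  · exact absurd h1 hpne
  · intro v
    have : v ∈ p := h1 ▸ LieSubmodule.mem_top v
    exact this

/-- If `g`'s range is contained in the range of an injective equivariant `f`, with `V` simple,
then `g` is a scalar multiple of `f`. -/
lemma scalar_of_range_le [LieModule ℂ K V] [FiniteDimensional ℂ V] [Nontrivial V]
    (hV : ∀ p : LieSubmodule ℂ K V, p = ⊥ ∨ p = ⊤)
    (f g : V →ₗ[ℂ] W)
    (hf : ∀ (x : K) (v : V), f ⁅x, v⁆ = ⁅x, f v⁆)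
    (hg : ∀ (x : K) (v : V), g ⁅x, v⁆ = ⁅x, g v⁆)
    (hfinj : Function.Injective f)
    (hrange : LinearMap.range g ≤ LinearMap.range f) :
    ∃ c : ℂ, g = c • f := by
  set e := LinearEquiv.ofInjective f hfinj with he
  set h : V →ₗ[ℂ] V := e.symm.toLinearMap ∘ₗ g.codRestrict (LinearMap.range f)
    (fun v => hrange ⟨v, rfl⟩) with hh
  have hfh : ∀ v, f (h v) = g v := by
    intro v
    calc f (h v) = ↑(e (h v)) := (LinearEquiv.ofInjective_apply f (h := hfinj) (h v)).symm
      _ = ↑(e (e.symm ⟨g v, hrange ⟨v, rfl⟩⟩)) := rfl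
      _ = g v := by rw [LinearEquiv.apply_symm_apply]
  have hhe : ∀ (x : K) (v : V), h ⁅x, v⁆ = ⁅x, h v⁆ := by
    intro x v
    apply hfinj
    rw [hfh, hf, hfh, hg]
  obtain ⟨c, hc⟩ := schur_scalar hV h hhe
  refine ⟨c, ?_⟩
  ext v
  have := congrArg f (hc v)
  rw [hfh, map_smul] at this
  rw [this]
  simp [hfh]

end Hom
/-- Key dimension bound: if `V` is a simple `K`-module, then
`dim V * dim (equivariant maps V → W) ≤ dim W`. -/
lemma lemB (K : Type) [LieRing K] [LieAlgebra ℂ K] :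
    ∀ (n : ℕ) (W : Type) [AddCommGroup W] [Module ℂ W] [LieRingModule K W]
      [LieModule ℂ K W] [FiniteDimensional ℂ W], finrank ℂ W ≤ n →
    ∀ (V : Type) [AddCommGroup V] [Module ℂ V] [LieRingModule K V]
      [LieModule ℂ K V] [FiniteDimensional ℂ V],
      (∀ p : LieSubmodule ℂ K V, p = ⊥ ∨ p = ⊤) → Nontrivial V →
      finrank ℂ V * finrank ℂ (equivMaps K V W) ≤ finrank ℂ W := by
  intro n
  induction n with
  | zero =>
    intro W _ _ _ _ _ hW V _ _ _ _ _ hV hVnt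
    have hsub : Subsingleton W := by
      rw [← finrank_zero_iff (R := ℂ)]
      omega
    have : finrank ℂ (equivMaps K V W) = 0 := by
      have : Subsingleton (V →ₗ[ℂ] W) := ⟨fun f g => by ext v; exact Subsingleton.elim _ _⟩
      have : Subsingleton (equivMaps K V W) := ⟨fun f g => Subtype.ext (Subsingleton.elim _ _)⟩
      exact finrank_zero_of_subsingleton
    rw [this, mul_zero]
    omega
  | succ n ih =>
    intro W _ _ _ _ _ hW V _ _ _ _ _ hV hVnt
    rcases Nat.eq_zero_or_pos (finrank ℂ (equivMaps K V W)) with he | he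
    · rw [he, mul_zero]; omega
    -- pick a nonzero equivariant map
    have : Nontrivial (equivMaps K V W) := by
      rwa [← finrank_pos_iff (R := ℂ)]
    obtain ⟨f0, hf0⟩ := exists_ne (0 : equivMaps K V W)
    set f : V →ₗ[ℂ] W := (f0 : V →ₗ[ℂ] W) with hfdef
    have hfE : ∀ (x : K) (v : V), f ⁅x, v⁆ = ⁅x, f v⁆ := f0.2
    have hfne : f ≠ 0 := by
      intro hc
      exact hf0 (Subtype.ext hc)
    -- f is injective
    have hfinj : Function.Injective f := by
      set kerp : LieSubmodule ℂ K V :=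
        { toSubmodule := LinearMap.ker f
          lie_mem := by
            intro x v hv
            show f ⁅x, v⁆ = 0
            have hv' : f v = 0 := hv
            rw [hfE, hv', lie_zero] } with hkerp
      rcases hV kerp with h1 | h1
      · rw [← LinearMap.ker_eq_bot]
        have : (kerp : Submodule ℂ V) = ⊥ := by rw [h1]; rfl
        exact this
      · exfalso
        apply hfne
        ext v
        have hv : v ∈ kerp := h1 ▸ LieSubmodule.mem_top v
        exact hv
    -- range of f as a Lie submodule
    set Nlie : LieSubmodule ℂ K W :=
      { toSubmodule := LinearMap.range f
        lie_mem := by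
          rintro x m ⟨v, rfl⟩
          exact ⟨⁅x, v⁆, hfE x v⟩ } with hNlie
    letI : FiniteDimensional ℂ (W ⧸ Nlie) :=
      (inferInstanceAs (FiniteDimensional ℂ (W ⧸ (Nlie : Submodule ℂ W))))
    have hrankV : finrank ℂ (Nlie : Submodule ℂ W) = finrank ℂ V :=
      LinearMap.finrank_range_of_inj hfinj
    have hq : finrank ℂ (W ⧸ Nlie) + finrank ℂ V = finrank ℂ W := by
      have := Submodule.finrank_quotient_add_finrank (Nlie : Submodule ℂ W)
      rwa [hrankV] at this
    have hVpos : 0 < finrank ℂ V := finrank_pos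
    -- the restriction map to the quotient
    set π : W →ₗ[ℂ] (W ⧸ Nlie) := ((LieSubmodule.Quotient.mk' Nlie : W →ₗ⁅ℂ,K⁆ W ⧸ Nlie) : W →ₗ[ℂ] W ⧸ Nlie) with hπ
    have hπe : ∀ (x : K) (w : W), π ⁅x, w⁆ = ⁅x, π w⁆ := fun x w =>
      (LieSubmodule.Quotient.mk' Nlie).map_lie x w
    set φ : (equivMaps K V W) →ₗ[ℂ] (V →ₗ[ℂ] (W ⧸ Nlie)) :=
      (LinearMap.llcomp ℂ V W (W ⧸ Nlie) π) ∘ₗ (equivMaps K V W).subtype with hφ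
    have hφrange : LinearMap.range φ ≤ equivMaps K V (W ⧸ Nlie) := by
      rintro _ ⟨g, rfl⟩
      intro x v
      simp only [hφ, LinearMap.coe_comp, Function.comp_apply, Submodule.coe_subtype,
        LinearMap.llcomp_apply]
      rw [g.2 x v, hπe]
    have hφker : finrank ℂ (LinearMap.ker φ) ≤ 1 := by
      have hle : LinearMap.ker φ ≤ Submodule.span ℂ {f0} := by
        intro g hg
        have hgr : LinearMap.range (g : V →ₗ[ℂ] W) ≤ LinearMap.range f := by
          rintro _ ⟨v, rfl⟩
          have : π ((g : V →ₗ[ℂ] W) v) = 0 := by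
            have : φ g = 0 := hg
            calc π ((g : V →ₗ[ℂ] W) v) = (φ g) v := rfl
              _ = 0 := by rw [this]; rfl
          have hmem : (g : V →ₗ[ℂ] W) v ∈ Nlie := by
            rwa [← LieSubmodule.Quotient.mk_eq_zero']
          exact hmem
        obtain ⟨c, hc⟩ := scalar_of_range_le hV f (g : V →ₗ[ℂ] W) hfE g.2 hfinj hgr
        have : (g : equivMaps K V W) = c • f0 := by
          apply Subtype.ext
          simpa using hc
        rw [this]
        exact Submodule.smul_mem _ c (Submodule.mem_span_singleton_self f0)
      calc finrank ℂ (LinearMap.ker φ) ≤ finrank ℂ (Submodule.span ℂ {f0}) :=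
            Submodule.finrank_mono hle
        _ = 1 := finrank_span_singleton hf0
    have hrn := LinearMap.finrank_range_add_finrank_ker φ
    have hranklt : finrank ℂ (LinearMap.range φ) ≤ finrank ℂ (equivMaps K V (W ⧸ Nlie)) :=
      Submodule.finrank_mono hφrange
    have hWq : finrank ℂ (W ⧸ Nlie) ≤ n := by omega
    have hih := ih (W ⧸ Nlie) hWq V hV hVnt
    calc finrank ℂ V * finrank ℂ (equivMaps K V W)
        = finrank ℂ V * (finrank ℂ (LinearMap.range φ) + finrank ℂ (LinearMap.ker φ)) := by
          rw [hrn]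
      _ ≤ finrank ℂ V * (finrank ℂ (equivMaps K V (W ⧸ Nlie)) + 1) := by
          apply Nat.mul_le_mul_left
          omega
      _ = finrank ℂ V * finrank ℂ (equivMaps K V (W ⧸ Nlie)) + finrank ℂ V := by ring
      _ ≤ finrank ℂ (W ⧸ Nlie) + finrank ℂ V := by omega
      _ = finrank ℂ W := hq
section Main

variable {ι : Type} [Fintype ι] [DecidableEq ι]

lemma lie_of_left (L : ι → Type) [∀ i, LieRing (L i)] [∀ i, LieAlgebra ℂ (L i)]
    (i : ι) (x : L i) (z : ⨁ j, L j) :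
    ⁅DirectSum.of L i x, z⁆ = DirectSum.of L i ⁅x, z i⁆ := by
  refine DFinsupp.ext fun j => ?_
  rw [DirectSum.bracket_apply]
  rcases eq_or_ne i j with rfl | hij
  · rw [DirectSum.of_eq_same, DirectSum.of_eq_same]
  · rw [DirectSum.of_eq_of_ne _ _ _ hij.symm, DirectSum.of_eq_of_ne _ _ _ hij.symm, zero_lie]

set_option maxHeartbeats 1000000 in
lemma key (L : ι → Type) [∀ i, LieRing (L i)] [∀ i, LieAlgebra ℂ (L i)]
    [∀ i, LieAlgebra.IsSimple ℂ (L i)] [∀ i, FiniteDimensional ℂ (L i)] :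
    ∀ (n : ℕ) (M : Type) [AddCommGroup M] [Module ℂ M] [LieRingModule (⨁ i, L i) M]
      [LieModule ℂ (⨁ i, L i) M] [FiniteDimensional ℂ M], finrank ℂ M ≤ n →
    ∀ (A : Finset ι), (∀ j ∈ A, ∃ (x : L j) (m : M), ⁅DirectSum.of L j x, m⁆ ≠ 0) →
    ∑ j ∈ A, minNontrivialDim (L j) ≤ finrank ℂ M := by
  intro n
  induction n using Nat.strong_induction_on with
  | _ n ih =>
  intro M _ _ _ _ _ hn A hA
  classical
  rcases A.eq_empty_or_nonempty with rfl | ⟨i, hiA⟩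
  · simp
  by_cases hs : ∃ N : LieSubmodule ℂ (⨁ i, L i) M, N ≠ ⊥ ∧ N ≠ ⊤
  · obtain ⟨N, hNbot, hNtop⟩ := hs
    letI : FiniteDimensional ℂ (M ⧸ N) :=
      inferInstanceAs (FiniteDimensional ℂ (M ⧸ (N : Submodule ℂ M)))
    -- if a summand acts trivially on N and on M ⧸ N then it acts trivially on M
    have htriv : ∀ j, (∀ (x : L j) (m : ↥N), ⁅DirectSum.of L j x, m⁆ = 0) →
        (∀ (x : L j) (m : M ⧸ N), ⁅DirectSum.of L j x, m⁆ = 0) →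
        ∀ (x : L j) (m : M), ⁅DirectSum.of L j x, m⁆ = 0 := by
      intro j h1 h2
      have hmemN : ∀ (y : L j) (m : M), ⁅DirectSum.of L j y, m⁆ ∈ N := by
        intro y m
        rw [← LieSubmodule.Quotient.mk_eq_zero']
        have : (LieSubmodule.Quotient.mk (N := N) ⁅DirectSum.of L j y, m⁆ : M ⧸ N)
            = ⁅DirectSum.of L j y, LieSubmodule.Quotient.mk (N := N) m⁆ := rfl
        rw [this, h2]
      have hzero : ∀ (x y : L j) (m : M), ⁅DirectSum.of L j x, ⁅DirectSum.of L j y, m⁆⁆ = 0 := by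
        intro x y m
        have h := h1 x ⟨⁅DirectSum.of L j y, m⁆, hmemN y m⟩
        have := congrArg (fun a : ↥N => (a : M)) h
        simpa using this
      letI : LieRingModule (L j) M := LieRingModule.compLieHom M (DirectSum.lieAlgebraOf ℂ ι L j)
      haveI : LieModule ℂ (L j) M := LieModule.compLieHom M (DirectSum.lieAlgebraOf ℂ ι L j)
      have hbr : ∀ (x : L j) (m : M), ⁅x, m⁆ = ⁅DirectSum.of L j x, m⁆ := fun x m => by
        rw [LieRingModule.compLieHom_apply]
        simp
      have hcomm : ∀ (x y : L j) (m : M), ⁅x, ⁅y, m⁆⁆ = ⁅y, ⁅x, m⁆⁆ := by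
        intro x y m
        rw [hbr y m, hbr x, hbr x m, hbr y, hzero, hzero]
      have := trivial_of_comm (L j) M hcomm
      intro x m
      rw [← hbr]
      exact this x m
    set A1 := A.filter (fun j => ∃ (x : L j) (m : ↥N), ⁅DirectSum.of L j x, m⁆ ≠ 0) with hA1
    set A2 := A.filter (fun j => ∃ (x : L j) (m : M ⧸ N), ⁅DirectSum.of L j x, m⁆ ≠ 0) with hA2
    have hsub : A ⊆ A1 ∪ A2 := by
      intro j hj
      rw [Finset.mem_union]
      by_contra hc
      push_neg at hc
      obtain ⟨hc1, hc2⟩ := hc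
      rw [hA1, Finset.mem_filter] at hc1
      rw [hA2, Finset.mem_filter] at hc2
      push_neg at hc1 hc2
      obtain ⟨x, m, hxm⟩ := hA j hj
      exact hxm (htriv j (by simpa using hc1 hj) (by simpa using hc2 hj) x m)
    have hN1 : 0 < finrank ℂ ↥N := by
      have : (N : Submodule ℂ M) ≠ ⊥ := by
        intro h
        exact hNbot ((LieSubmodule.toSubmodule_eq_bot (N := N)).mp h)
      have h2 := mt Submodule.finrank_eq_zero.mp this
      show 0 < finrank ℂ ↥(N : Submodule ℂ M)
      omega
    have hNlt : finrank ℂ ↥N < finrank ℂ M := by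
      show finrank ℂ ↥(N : Submodule ℂ M) < finrank ℂ M
      apply Submodule.finrank_lt (s := (N : Submodule ℂ M))
      intro h
      exact hNtop ((LieSubmodule.toSubmodule_eq_top (N := N)).mp h)
    have hNN : finrank ℂ ↥(N : Submodule ℂ M) = finrank ℂ ↥N := rfl
    have hq : finrank ℂ (M ⧸ N) + finrank ℂ ↥N = finrank ℂ M := by
      have := Submodule.finrank_quotient_add_finrank (N : Submodule ℂ M)
      rwa [hNN] at this
    have hQlt : finrank ℂ (M ⧸ N) < finrank ℂ M := by omega
    have ihN := ih (finrank ℂ ↥N) (lt_of_lt_of_le hNlt hn) ↥N le_rfl A1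
      (fun j hj => (Finset.mem_filter.mp hj).2)
    have ihQ := ih (finrank ℂ (M ⧸ N)) (lt_of_lt_of_le hQlt hn) (M ⧸ N) le_rfl A2
      (fun j hj => (Finset.mem_filter.mp hj).2)
    calc ∑ j ∈ A, minNontrivialDim (L j)
        ≤ ∑ j ∈ A1 ∪ A2, minNontrivialDim (L j) :=
          Finset.sum_le_sum_of_subset hsub
      _ ≤ ∑ j ∈ A1, minNontrivialDim (L j) + ∑ j ∈ A2, minNontrivialDim (L j) := by
          have := Finset.sum_union_inter (s₁ := A1) (s₂ := A2) (f := fun j => minNontrivialDim (L j))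
          omega
      _ ≤ finrank ℂ ↥N + finrank ℂ (M ⧸ N) := Nat.add_le_add ihN ihQ
      _ = finrank ℂ M := by omega
  · push_neg at hs
    obtain ⟨x₀, m₀, hm₀⟩ := hA i hiA
    haveI hMnt : Nontrivial M := ⟨⟨⁅DirectSum.of L i x₀, m₀⁆, 0, hm₀⟩⟩
    letI : LieRingModule (L i) M := LieRingModule.compLieHom M (DirectSum.lieAlgebraOf ℂ ι L i)
    haveI : LieModule ℂ (L i) M := LieModule.compLieHom M (DirectSum.lieAlgebraOf ℂ ι L i)
    have hbr : ∀ (x : L i) (m : M), ⁅x, m⁆ = ⁅DirectSum.of L i x, m⁆ := fun x m => by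
      rw [LieRingModule.compLieHom_apply]
      simp
    -- the L i invariants of M are trivial
    have hWinv : ∀ m : M, (∀ x : L i, ⁅DirectSum.of L i x, m⁆ = 0) → m = 0 := by
      set Winv : LieSubmodule ℂ (⨁ k, L k) M :=
        { carrier := {m | ∀ x : L i, ⁅DirectSum.of L i x, m⁆ = 0}
          add_mem' := by intro a b ha hb x; rw [lie_add, ha x, hb x, add_zero]
          zero_mem' := by intro x; rw [lie_zero]
          smul_mem' := by intro c a ha x; rw [lie_smul, ha x, smul_zero]
          lie_mem := by
            intro z m hm x
            have h1 : ⁅DirectSum.of L i x, ⁅z, m⁆⁆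
                = ⁅⁅DirectSum.of L i x, z⁆, m⁆ + ⁅z, ⁅DirectSum.of L i x, m⁆⁆ :=
              leibniz_lie _ _ _
            show ⁅DirectSum.of L i x, ⁅z, m⁆⁆ = 0
            rw [h1, hm x, lie_zero, add_zero, lie_of_left L i x z, hm ⁅x, z i⁆] } with hWinvdef
      intro m hm
      have hne : Winv ≠ ⊤ := by
        intro h
        apply hm₀
        have hmem : m₀ ∈ Winv := h ▸ LieSubmodule.mem_top m₀
        exact hmem x₀
      have hbot : Winv = ⊥ := by
        by_contra h
        exact hne (hs Winv h)
      have hm' : m ∈ Winv := hm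
      rw [hbot] at hm'
      simpa using hm'
    -- a minimal nonzero L i-submodule of M
    have hTne : (⊤ : LieSubmodule ℂ (L i) M) ≠ ⊥ := by
      intro h
      apply hm₀
      have h0 : ⁅DirectSum.of L i x₀, m₀⁆ ∈ (⊤ : LieSubmodule ℂ (L i) M) := LieSubmodule.mem_top _
      rw [h] at h0
      simpa using h0
    set 𝒮 : Set ℕ := {k | ∃ p : LieSubmodule ℂ (L i) M, p ≠ ⊥ ∧ finrank ℂ ↥p = k} with h𝒮
    have h𝒮ne : 𝒮.Nonempty := ⟨finrank ℂ ↥(⊤ : LieSubmodule ℂ (L i) M), ⊤, hTne, rfl⟩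
    obtain ⟨Vs, hVsne, hVsrank⟩ := Nat.sInf_mem h𝒮ne
    have hmin : ∀ p : LieSubmodule ℂ (L i) M, p ≠ ⊥ → sInf 𝒮 ≤ finrank ℂ ↥p :=
      fun p hp => Nat.sInf_le ⟨p, hp, rfl⟩
    haveI hVsnt : Nontrivial ↥Vs := (LieSubmodule.nontrivial_iff_ne_bot _ _ _).mpr hVsne
    -- Vs is a simple L i-module
    have hVsimple : ∀ q : LieSubmodule ℂ (L i) ↥Vs, q = ⊥ ∨ q = ⊤ := by
      intro q
      rcases eq_or_ne q ⊥ with h | h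
      · exact Or.inl h
      right
      set q' : LieSubmodule ℂ (L i) M := LieSubmodule.map Vs.incl q with hq'def
      have hinclinj : Function.Injective (Vs.incl : ↥Vs →ₗ[ℂ] M) := Subtype.coe_injective
      have hq'ne : q' ≠ ⊥ := by
        haveI := (LieSubmodule.nontrivial_iff_ne_bot _ _ _).mpr h
        obtain ⟨v, hvne⟩ := exists_ne (0 : ↥q)
        rw [Ne, LieSubmodule.eq_bot_iff]
        intro hbot
        apply hvne
        have hmem : Vs.incl (v : ↥Vs) ∈ q' := (LieSubmodule.mem_map _).mpr ⟨v, v.2, rfl⟩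
        have := hbot _ hmem
        have hz : ((v : ↥Vs) : M) = 0 := this
        have h7 : (v : ↥Vs) = (0 : ↥Vs) := Subtype.coe_injective (by simpa using hz)
        exact Subtype.coe_injective (by simpa using h7)
      have h1 : sInf 𝒮 ≤ finrank ℂ ↥q' := hmin q' hq'ne
      have hq'sub : (q' : Submodule ℂ M) = (q : Submodule ℂ ↥Vs).map (Vs.incl : ↥Vs →ₗ[ℂ] M) :=
        LieSubmodule.toSubmodule_map ..
      have h2 : (q' : Submodule ℂ M) ≤ (Vs : Submodule ℂ M) := by
        rw [hq'sub]
        rintro _ ⟨v, _, rfl⟩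
        exact v.2
      have h3 : finrank ℂ ↥q' ≤ finrank ℂ ↥Vs := by
        have := Submodule.finrank_mono (t := (Vs : Submodule ℂ M)) h2
        exact this
      have h4 : finrank ℂ ↥q' = finrank ℂ ↥Vs := le_antisymm h3 (by rw [← hVsrank] at h1; exact h1)
      have h5 : finrank ℂ ↥(q : Submodule ℂ ↥Vs) = finrank ℂ ↥(q' : Submodule ℂ M) := by
        have e := Submodule.equivMapOfInjective (Vs.incl : ↥Vs →ₗ[ℂ] M) hinclinj
          (q : Submodule ℂ ↥Vs)
        have h5a := LinearEquiv.finrank_eq e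
        rw [h5a, ← hq'sub]
      have h6 : (q : Submodule ℂ ↥Vs) = ⊤ := by
        apply Submodule.eq_top_of_finrank_eq
        have h4' : finrank ℂ ↥(q' : Submodule ℂ M) = finrank ℂ ↥Vs := h4
        rw [h5, h4']
      exact (LieSubmodule.toSubmodule_eq_top (N := q)).mp h6
    -- the action of L i on Vs is nontrivial
    have hVact : ∃ (x : L i) (v : ↥Vs), ⁅x, v⁆ ≠ 0 := by
      by_contra hc
      push_neg at hc
      apply hVsne
      rw [LieSubmodule.eq_bot_iff]
      intro m hm
      apply hWinv
      intro x
      have h := congrArg (fun a : ↥Vs => (a : M)) (hc x ⟨m, hm⟩)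
      simp only [LieSubmodule.coe_bracket, ZeroMemClass.coe_zero] at h
      rw [← hbr]
      exact h
    have hdi : minNontrivialDim (L i) ≤ finrank ℂ ↥Vs := d_le (L i) ↥Vs hVact
    -- direct sum module structure on Vs via projection to the i-th component
    letI : LieRingModule (⨁ k, L k) ↥Vs :=
      LieRingModule.compLieHom ↥Vs (DirectSum.lieAlgebraComponent ℂ ι L i)
    haveI : LieModule ℂ (⨁ k, L k) ↥Vs :=
      LieModule.compLieHom ↥Vs (DirectSum.lieAlgebraComponent ℂ ι L i)
    have hbrV : ∀ (z : ⨁ k, L k) (v : ↥Vs), ⁅z, v⁆ = ⁅z i, v⁆ := fun z v => by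
      rw [LieRingModule.compLieHom_apply]
      rfl
    set E := equivMaps (L i) ↥Vs M with hE
    -- E is closed under the bracket with elements of the direct sum
    have hEclosed : ∀ (z : ⨁ k, L k) (f : ↥Vs →ₗ[ℂ] M), f ∈ E → ⁅z, f⁆ ∈ E := by
      intro z f hf x v
      have hfe : ∀ (x : L i) (v : ↥Vs), f ⁅x, v⁆ = ⁅DirectSum.of L i x, f v⁆ := by
        intro x v
        rw [hf x v, hbr]
      have e1 : (⁅z, f⁆ : ↥Vs →ₗ[ℂ] M) ⁅x, v⁆ = ⁅z, f ⁅x, v⁆⁆ - f ⁅z i, ⁅x, v⁆⁆ := by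
        rw [LieHom.lie_apply, hbrV]
      have e2 : (⁅z, f⁆ : ↥Vs →ₗ[ℂ] M) v = ⁅z, f v⁆ - f ⁅z i, v⁆ := by
        rw [LieHom.lie_apply, hbrV]
      rw [e1, e2, hbr, hfe x v]
      rw [leibniz_lie (z i) x v, map_add, hfe _ v, hfe x _]
      rw [leibniz_lie z (DirectSum.of L i x) (f v)]
      have e3 : ⁅z, DirectSum.of L i x⁆ = -DirectSum.of L i ⁅x, z i⁆ := by
        rw [← lie_skew, lie_of_left]
      have e4 : DirectSum.of L i ⁅x, z i⁆ = -DirectSum.of L i ⁅z i, x⁆ := by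
        rw [← lie_skew, map_neg]
      rw [e3, e4, neg_neg, lie_sub]
      abel
    set Elie : LieSubmodule ℂ (⨁ k, L k) (↥Vs →ₗ[ℂ] M) :=
      { toSubmodule := E
        lie_mem := fun {z f} hf => hEclosed z f hf } with hElie
    -- decomposition of the bracket on images
    have hdec : ∀ (z : ⨁ k, L k) (f : ↥Vs →ₗ[ℂ] M) (v : ↥Vs),
        ⁅z, f v⁆ = (⁅z, f⁆ : ↥Vs →ₗ[ℂ] M) v + f ⁅z i, v⁆ := by
      intro z f v
      rw [LieHom.lie_apply, hbrV]
      abel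
    -- the sum of all images of equivariant maps is all of M
    set Ssup : Submodule ℂ M := ⨆ f : ↥E, LinearMap.range (f : ↥Vs →ₗ[ℂ] M) with hSsup
    have hSsup_lie : ∀ (z : ⨁ k, L k) (m : M), m ∈ Ssup → ⁅z, m⁆ ∈ Ssup := by
      intro z m hm
      have hle : Ssup ≤ Submodule.comap (LieModule.toEnd ℂ (⨁ k, L k) M z) Ssup := by
        apply iSup_le
        rintro ⟨f, hf⟩ _ ⟨v, rfl⟩
        simp only [Submodule.mem_comap, LieModule.toEnd_apply_apply]
        rw [hdec z f v]
        apply Submodule.add_mem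
        · exact (le_iSup (fun f : ↥E => LinearMap.range (f : ↥Vs →ₗ[ℂ] M))
            ⟨⁅z, f⁆, hEclosed z f hf⟩) ⟨v, rfl⟩
        · exact (le_iSup (fun f : ↥E => LinearMap.range (f : ↥Vs →ₗ[ℂ] M))
            ⟨f, hf⟩) ⟨_, rfl⟩
      have := hle hm
      simpa [LieModule.toEnd_apply_apply] using this
    set Nsup : LieSubmodule ℂ (⨁ k, L k) M :=
      { toSubmodule := Ssup
        lie_mem := fun {z m} hm => hSsup_lie z m hm } with hNsup
    have hincl : (Vs : Submodule ℂ M).subtype ∈ E := by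
      intro x v
      rfl
    have hNsupne : Nsup ≠ ⊥ := by
      obtain ⟨v₀, hv₀⟩ := exists_ne (0 : ↥Vs)
      rw [Ne, LieSubmodule.eq_bot_iff]
      intro hbot
      apply hv₀
      have hmem : (v₀ : M) ∈ Ssup :=
        (le_iSup (fun f : ↥E => LinearMap.range (f : ↥Vs →ₗ[ℂ] M))
          ⟨(Vs : Submodule ℂ M).subtype, hincl⟩) ⟨v₀, rfl⟩
      have := hbot _ hmem
      ext
      exact this
    have hmemSsup : ∀ m : M, m ∈ Ssup := by
      intro m
      have h := hs Nsup hNsupne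
      have : m ∈ Nsup := h ▸ LieSubmodule.mem_top m
      exact this
    -- every summand in A.erase i acts nontrivially on Elie
    have hjact : ∀ j ∈ A.erase i, ∃ (x : L j) (ff : ↥Elie), ⁅DirectSum.of L j x, ff⁆ ≠ 0 := by
      intro j hj
      have hji : j ≠ i := Finset.ne_of_mem_erase hj
      obtain ⟨x, m, hne⟩ := hA j (Finset.mem_of_mem_erase hj)
      by_contra hc
      push_neg at hc
      apply hne
      have hkill : Ssup ≤ LinearMap.ker (LieModule.toEnd ℂ (⨁ k, L k) M (DirectSum.of L j x)) := by
        apply iSup_le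
        rintro ⟨f, hf⟩ _ ⟨v, rfl⟩
        simp only [LinearMap.mem_ker, LieModule.toEnd_apply_apply]
        have h0 : (⁅DirectSum.of L j x, (⟨f, hf⟩ : ↥Elie)⁆ : ↥Elie) = 0 := hc x ⟨f, hf⟩
        have h0' : (⁅DirectSum.of L j x, f⁆ : ↥Vs →ₗ[ℂ] M) = 0 := by
          have := congrArg (fun a : ↥Elie => (a : ↥Vs →ₗ[ℂ] M)) h0
          simpa using this
        have hv0 : ⁅(DirectSum.of L j x) i, v⁆ = (0 : ↥Vs) := by
          rw [DirectSum.of_eq_of_ne _ _ _ hji.symm, zero_lie]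
        rw [hdec _ f v, h0', hv0]
        simp
      have := hkill (hmemSsup m)
      simpa [LieModule.toEnd_apply_apply] using this
    -- conclude via the dimension bound
    have hlemB : finrank ℂ ↥Vs * finrank ℂ ↥E ≤ finrank ℂ M := by
      rw [hE]
      exact lemB (L i) (finrank ℂ M) M le_rfl ↥Vs hVsimple hVsnt
    have hv2 : 2 ≤ finrank ℂ ↥Vs := le_trans (two_le_d (L i)) hdi
    have hm1 : 0 < finrank ℂ M := finrank_pos
    have hee : finrank ℂ ↥Elie = finrank ℂ ↥E := rfl
    have helt : finrank ℂ ↥Elie < finrank ℂ M := by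
      have h2e : 2 * finrank ℂ ↥E ≤ finrank ℂ ↥Vs * finrank ℂ ↥E :=
        Nat.mul_le_mul_right _ hv2
      rw [hee]
      omega
    have ihE := ih (finrank ℂ ↥Elie) (lt_of_lt_of_le helt hn) ↥Elie le_rfl (A.erase i) hjact
    have hsum := Finset.add_sum_erase A (fun j => minNontrivialDim (L j)) hiA
    rcases Finset.eq_empty_or_nonempty (A.erase i) with hemp | ⟨j₀, hj₀⟩
    · rw [← hsum, hemp]
      simp only [Finset.sum_empty, add_zero]
      exact le_trans (d_le (L i) M ⟨x₀, m₀, by rw [hbr]; exact hm₀⟩) le_rfl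
    · have hS2 : 2 ≤ ∑ j ∈ A.erase i, minNontrivialDim (L j) :=
        le_trans (two_le_d (L j₀)) (Finset.single_le_sum (f := fun j => minNontrivialDim (L j)) (fun k _ => Nat.zero_le _) hj₀)
      rw [← hsum]
      show minNontrivialDim (L i) + ∑ j ∈ A.erase i, minNontrivialDim (L j) ≤ finrank ℂ M
      have ihE' : ∑ j ∈ A.erase i, minNontrivialDim (L j) ≤ finrank ℂ ↥E := hee ▸ ihE
      have hd2 := two_le_d (L i)
      have h1 : minNontrivialDim (L i) + ∑ j ∈ A.erase i, minNontrivialDim (L j)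
          ≤ minNontrivialDim (L i) * ∑ j ∈ A.erase i, minNontrivialDim (L j) := by
        nlinarith [hd2, hS2]
      have h2 : minNontrivialDim (L i) * ∑ j ∈ A.erase i, minNontrivialDim (L j)
          ≤ finrank ℂ ↥Vs * finrank ℂ ↥E := Nat.mul_le_mul hdi ihE'
      omega


end Main

/-- If `𝔤 = 𝔤₁ ⊕ ⋯ ⊕ 𝔤ₙ` is a direct sum of simple complex Lie algebras, `dᵢ` is the minimal
dimension of a nontrivial `𝔤ᵢ`-module, and `M` is a finite-dimensional `𝔤`-module with
`dim M < d₁ + ⋯ + dₙ`, then some summand `𝔤ᵢ` acts trivially on `M`. -/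
theorem directSum_module_small_dim_trivial_on_summand
    {ι : Type} [Fintype ι] [DecidableEq ι]
    (L : ι → Type) [∀ i, LieRing (L i)] [∀ i, LieAlgebra ℂ (L i)]
    [∀ i, LieAlgebra.IsSimple ℂ (L i)] [∀ i, FiniteDimensional ℂ (L i)]
    (M : Type) [AddCommGroup M] [Module ℂ M]
    [LieRingModule (⨁ i, L i) M] [LieModule ℂ (⨁ i, L i) M]
    [FiniteDimensional ℂ M]
    (hdim : Module.finrank ℂ M < ∑ i, minNontrivialDim (L i)) :
    ∃ i, ∀ (x : L i) (m : M), ⁅DirectSum.of L i x, m⁆ = 0 := by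
  by_contra hcon
  push_neg at hcon
  have hkey := key L (Module.finrank ℂ M) M le_rfl Finset.univ
    (fun j _ => by
      obtain ⟨x, m, hxm⟩ := hcon j
      exact ⟨x, m, hxm⟩)
  omega
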